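/- Let A be an n×d real matrix, b ∈ ℝ^n, c ∈ ℝ^d with c in the orthogonal complement of ker(A), and p ≥ 2. For any t ≥ 0 and any minimizer x(t) of x ↦ c·x + Σ_i f_t((Ax - b)_i) over x ∈ ker(A)^⊥, one has c·x(t) + ‖Ax(t) - b‖_p^p ≤ n(p/2 - 1)t^p + min_{x ∈ ℝ^d} (c·x + ‖Ax - b‖_p^p), where f_t(s) = (p/2)t^{p-2}s² for |s| ≤ t and |s|^p + (p/2 - 1)t^p otherwise. -/

import Mathlib

open Matrix

noncomputable def ft (p t s : ℝ) : ℝ :=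
  if |s| ≤ t then (p / 2) * t ^ (p - 2) * s ^ 2
  else |s| ^ p + (p / 2 - 1) * t ^ p

lemma abs_rpow_le_ft {p t : ℝ} (hp : 2 ≤ p) (ht : 0 ≤ t) (s : ℝ) :
    |s| ^ p ≤ ft p t s := by
  unfold ft
  split_ifs with h
  · rcases eq_or_ne s 0 with rfl | hs
    · simp only [abs_zero]
      rw [Real.zero_rpow (by linarith)]
      positivity
    · have h1 : |s| ^ p = |s| ^ (p - 2) * s ^ 2 := by
        rw [← sq_abs s, ← Real.rpow_natCast |s| 2, ← Real.rpow_add (abs_pos.mpr hs)]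
        norm_num
      have h2 : |s| ^ (p - 2) ≤ t ^ (p - 2) :=
        Real.rpow_le_rpow (abs_nonneg s) h (by linarith)
      have h3 : (0:ℝ) ≤ t ^ (p - 2) * s ^ 2 := by positivity
      calc |s| ^ p = |s| ^ (p - 2) * s ^ 2 := h1
        _ ≤ t ^ (p - 2) * s ^ 2 := by nlinarith [sq_nonneg s]
        _ ≤ (p / 2) * t ^ (p - 2) * s ^ 2 := by nlinarith
  · have : (0:ℝ) ≤ (p / 2 - 1) * t ^ p := by
      have := Real.rpow_nonneg ht p
      nlinarith
    linarith

lemma ft_le_add {p t : ℝ} (hp : 2 ≤ p) (ht : 0 ≤ t) (s : ℝ) :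
    ft p t s ≤ |s| ^ p + (p / 2 - 1) * t ^ p := by
  unfold ft
  split_ifs with h
  · have hp0 : (0:ℝ) < p := by linarith
    have key : s ^ 2 * t ^ (p - 2) ≤ (2 / p) * |s| ^ p + (1 - 2 / p) * t ^ p := by
      have := Real.geom_mean_le_arith_mean2_weighted
        (w₁ := 2 / p) (w₂ := 1 - 2 / p) (p₁ := |s| ^ p) (p₂ := t ^ p)
        (by positivity) (by rw [sub_nonneg, div_le_one hp0]; linarith)
        (Real.rpow_nonneg (abs_nonneg s) p) (Real.rpow_nonneg ht p) (by ring)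
      calc s ^ 2 * t ^ (p - 2) = (|s| ^ p) ^ (2 / p) * (t ^ p) ^ (1 - 2 / p) := by
            rw [← Real.rpow_mul (abs_nonneg s), ← Real.rpow_mul ht]
            have e1 : p * (2 / p) = 2 := by field_simp
            have e2 : p * (1 - 2 / p) = p - 2 := by field_simp
            rw [e1, e2, ← sq_abs s, ← Real.rpow_natCast |s| 2]
            norm_num
        _ ≤ _ := this
    have h2 := mul_le_mul_of_nonneg_left key (by linarith : (0:ℝ) ≤ p / 2)
    have e : (p / 2) * ((2 / p) * |s| ^ p + (1 - 2 / p) * t ^ p)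
        = |s| ^ p + (p / 2 - 1) * t ^ p := by field_simp
    rw [e] at h2
    nlinarith [h2]
  · exact le_refl _

theorem homotopy_approx {n d : ℕ} (A : Matrix (Fin n) (Fin d) ℝ)
    (b : Fin n → ℝ) (c : Fin d → ℝ) (p t : ℝ) (hp : 2 ≤ p) (ht : 0 ≤ t)
    (hc : ∀ v : Fin d → ℝ, A.mulVec v = 0 → c ⬝ᵥ v = 0)
    (xt xstar : Fin d → ℝ)
    (hxt_mem : ∀ v : Fin d → ℝ, A.mulVec v = 0 → xt ⬝ᵥ v = 0)
    (hxt : IsMinOn (fun x => c ⬝ᵥ x + ∑ i, ft p t ((A.mulVec x - b) i))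
      {x | ∀ v : Fin d → ℝ, A.mulVec v = 0 → x ⬝ᵥ v = 0} xt)
    (hxstar : IsMinOn (fun x => c ⬝ᵥ x + ∑ i, |(A.mulVec x - b) i| ^ p)
      Set.univ xstar) :
    c ⬝ᵥ xt + ∑ i, |(A.mulVec xt - b) i| ^ p
      ≤ n * (p / 2 - 1) * t ^ p
        + (c ⬝ᵥ xstar + ∑ i, |(A.mulVec xstar - b) i| ^ p) := by
  -- decompose xstar into kernel part + orthogonal part
  obtain ⟨x', hx'S, hAeq, hceq⟩ :
      ∃ x' : Fin d → ℝ, (∀ v : Fin d → ℝ, A.mulVec v = 0 → x' ⬝ᵥ v = 0) ∧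
        A.mulVec x' = A.mulVec xstar ∧ c ⬝ᵥ x' = c ⬝ᵥ xstar := by
    let K : Submodule ℝ (EuclideanSpace ℝ (Fin d)) :=
      LinearMap.ker ((Matrix.mulVecLin A).comp
        (WithLp.linearEquiv 2 ℝ (Fin d → ℝ)).toLinearMap)
    obtain ⟨k, hk, x', hx', hxs⟩ :=
      K.exists_add_mem_mem_orthogonal (WithLp.toLp 2 xstar)
    have hAk : A.mulVec k.ofLp = 0 := by
      simpa [K, Matrix.mulVecLin_apply] using hk
    refine ⟨x'.ofLp, ?_, ?_, ?_⟩
    · intro v hv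
      have hvK : (WithLp.toLp 2 v) ∈ K := by
        simpa [K, Matrix.mulVecLin_apply] using hv
      have h0 := (Submodule.mem_orthogonal K x').mp hx' (WithLp.toLp 2 v) hvK
      simpa [dotProduct, PiLp.inner_apply, RCLike.inner_apply, mul_comm]
        using h0
    · have : xstar = k.ofLp + x'.ofLp := by simpa using congrArg WithLp.ofLp hxs
      rw [this, Matrix.mulVec_add, hAk, zero_add]
    · have : xstar = k.ofLp + x'.ofLp := by simpa using congrArg WithLp.ofLp hxs
      rw [this, dotProduct_add, hc k.ofLp hAk, zero_add]
  have step1 : c ⬝ᵥ xt + ∑ i, |(A.mulVec xt - b) i| ^ p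
      ≤ c ⬝ᵥ xt + ∑ i, ft p t ((A.mulVec xt - b) i) := by
    gcongr with i _
    exact abs_rpow_le_ft hp ht _
  have step2 : c ⬝ᵥ xt + ∑ i, ft p t ((A.mulVec xt - b) i)
      ≤ c ⬝ᵥ x' + ∑ i, ft p t ((A.mulVec x' - b) i) := hxt hx'S
  have step3 : c ⬝ᵥ x' + ∑ i, ft p t ((A.mulVec x' - b) i)
      ≤ c ⬝ᵥ xstar + ∑ i, (|(A.mulVec xstar - b) i| ^ p + (p / 2 - 1) * t ^ p) := by
    rw [hceq, hAeq]
    gcongr with i _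
    exact ft_le_add hp ht _
  have step4 : ∑ i : Fin n, (|(A.mulVec xstar - b) i| ^ p + (p / 2 - 1) * t ^ p)
      = (∑ i, |(A.mulVec xstar - b) i| ^ p) + n * (p / 2 - 1) * t ^ p := by
    rw [Finset.sum_add_distrib, Finset.sum_const, Finset.card_univ, Fintype.card_fin]
    push_cast
    ring
  rw [step4] at step3
  linarith
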